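/- Let p ≥ 3 be odd, m, ℓ ∈ ℕ with ℓ ≥ 1, let v be an m-vertex of the pillow P, K the union of all m-edges meeting v, and Ω the interior of the union of all (m+ℓ)-tiles meeting K. Then Ω contains the open p^{-(m+ℓ)}-neighborhood of K. -/

import Mathlib

noncomputable section

/-- The Euclidean plane, the universal unfolding of the pillow `P` (the pillow is the
quotient of `ℝ²` by the wallpaper group generated by the reflections in the grid lines,
and all sets appearing below are local unfolded models of the corresponding sets in `P`). -/
abbrev E2 := EuclideanSpace ℝ (Fin 2)

/-- The (closed) `n`-tile with address `(i,j) ∈ ℤ²`: a square of side `p^{-n}`. -/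
def tileE (p n : ℕ) (i j : ℤ) : Set E2 :=
  {z | z 0 ∈ Set.Icc ((i : ℝ) / (p : ℝ) ^ n) (((i : ℝ) + 1) / (p : ℝ) ^ n) ∧
       z 1 ∈ Set.Icc ((j : ℝ) / (p : ℝ) ^ n) (((j : ℝ) + 1) / (p : ℝ) ^ n)}

/-- `K`: the union of all `m`-edges meeting the `m`-vertex `v = (a p^{-m}, b p^{-m})`
(the "cross" at `v`). -/
def crossK (p m : ℕ) (a b : ℤ) : Set E2 :=
  {z | (z 0 = (a : ℝ) / (p : ℝ) ^ m ∧ |z 1 - (b : ℝ) / (p : ℝ) ^ m| ≤ 1 / (p : ℝ) ^ m) ∨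
       (z 1 = (b : ℝ) / (p : ℝ) ^ m ∧ |z 0 - (a : ℝ) / (p : ℝ) ^ m| ≤ 1 / (p : ℝ) ^ m)}

/-- `Ω`: the interior of the union of all `(m+ℓ)`-tiles that meet `K`. -/
def OmegaSet (p m ℓ : ℕ) (a b : ℤ) : Set E2 :=
  interior (⋃ i : ℤ, ⋃ j : ℤ,
    {z | z ∈ tileE p (m + ℓ) i j ∧ (tileE p (m + ℓ) i j ∩ crossK p m a b).Nonempty})

/-- `Ω` contains the open `p^{-(m+ℓ)}`-neighborhood of `K`. -/
lemma coord_dist_le (x y : E2) (i : Fin 2) : |y i - x i| ≤ dist y x := by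
  rw [EuclideanSpace.dist_eq, Real.le_sqrt (abs_nonneg _) (by positivity)]
  calc |y i - x i| ^ 2 = dist (y i) (x i) ^ 2 := by rw [Real.dist_eq]
    _ ≤ ∑ j, dist (y j) (x j) ^ 2 :=
        Finset.single_le_sum (f := fun j => dist (y j) (x j) ^ 2)
          (fun j _ => by positivity) (Finset.mem_univ i)

lemma key1d (P : ℝ) (hP : 0 < P) (c d : ℤ) (x1 y1 : ℝ)
    (hcd : (c : ℝ) / P ≤ x1) (hxd : x1 ≤ (d : ℝ) / P) (hy : |y1 - x1| < 1 / P) :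
    ∃ j t : ℤ, (j : ℝ) / P ≤ y1 ∧ y1 ≤ ((j : ℝ) + 1) / P ∧
      (j : ℝ) / P ≤ (t : ℝ) / P ∧ (t : ℝ) / P ≤ ((j : ℝ) + 1) / P ∧
      (c : ℝ) / P ≤ (t : ℝ) / P ∧ (t : ℝ) / P ≤ (d : ℝ) / P := by
  rw [abs_sub_lt_iff] at hy
  have hc' : (c : ℝ) ≤ x1 * P := by rw [div_le_iff₀ hP] at hcd; linarith
  have hd' : x1 * P ≤ (d : ℝ) := by rw [le_div_iff₀ hP] at hxd; linarith
  have hmul : 1 / P * P = 1 := by field_simp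
  have h1 : y1 * P < x1 * P + 1 := by nlinarith [mul_lt_mul_of_pos_right hy.1 hP]
  have h2 : x1 * P - 1 < y1 * P := by nlinarith [mul_lt_mul_of_pos_right hy.2 hP]
  set j : ℤ := ⌊y1 * P⌋ with hjdef
  have hjle : (j : ℝ) ≤ y1 * P := Int.floor_le _
  have hjgt : y1 * P < (j : ℝ) + 1 := Int.lt_floor_add_one _
  have hjd : j ≤ d := by
    have h : (j : ℝ) < ((d + 1 : ℤ) : ℝ) := by push_cast; linarith
    have : j < d + 1 := by exact_mod_cast h
    omega
  have hcj : c ≤ j + 1 := by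
    have h : (c : ℝ) < ((j + 2 : ℤ) : ℝ) := by push_cast; linarith
    have : c < j + 2 := by exact_mod_cast h
    omega
  have hcd2 : c ≤ d := by
    have h : (c : ℝ) ≤ ((d : ℤ) : ℝ) := by push_cast; linarith
    exact_mod_cast h
  refine ⟨j, max j c, ?_, ?_, ?_, ?_, ?_, ?_⟩
  · rw [div_le_iff₀ hP]; linarith
  · rw [le_div_iff₀ hP]; linarith
  · gcongr; exact_mod_cast le_max_left j c
  · have h : ((max j c : ℤ) : ℝ) ≤ ((j + 1 : ℤ) : ℝ) := by
      exact_mod_cast max_le (by omega) hcj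
    rw [div_le_div_iff_of_pos_right hP]; push_cast at h ⊢; nlinarith
  · gcongr; exact_mod_cast le_max_right j c
  · gcongr; exact_mod_cast max_le hjd hcd2


lemma pick_col (P : ℝ) (hP : 0 < P) (A : ℤ) (x0 y0 : ℝ) (hx : x0 = (A : ℝ) / P)
    (h : |y0 - x0| < 1 / P) :
    ∃ i : ℤ, ((i : ℝ) / P ≤ y0 ∧ y0 ≤ ((i : ℝ) + 1) / P) ∧
      ((i : ℝ) / P ≤ x0 ∧ x0 ≤ ((i : ℝ) + 1) / P) := by
  rw [abs_sub_lt_iff] at h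
  have hmul : 1 / P * P = 1 := by field_simp
  have hxP : x0 * P = (A : ℝ) := by rw [hx]; field_simp
  have h1 : y0 * P < (A : ℝ) + 1 := by nlinarith [mul_lt_mul_of_pos_right h.1 hP]
  have h2 : (A : ℝ) - 1 < y0 * P := by nlinarith [mul_lt_mul_of_pos_right h.2 hP]
  by_cases hc : (A : ℝ) / P ≤ y0
  · refine ⟨A, ⟨hc, ?_⟩, ?_, ?_⟩
    · rw [le_div_iff₀ hP]; linarith
    · rw [hx]
    · rw [hx]; gcongr; linarith
  · push_neg at hc
    refine ⟨A - 1, ⟨?_, ?_⟩, ?_, ?_⟩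
    · rw [div_le_iff₀ hP]; push_cast; linarith
    · push_cast; rw [le_div_iff₀ hP]
      have hAc : (A : ℝ) / P * P = A := by field_simp
      nlinarith [mul_lt_mul_of_pos_right hc hP]
    · rw [hx]; gcongr; push_cast; linarith
    · rw [hx]; push_cast; gcongr <;> linarith

theorem stmt7 (p m ℓ : ℕ) (hp : 3 ≤ p) (hodd : Odd p) (hℓ : 1 ≤ ℓ) (a b : ℤ) :
    ∀ x ∈ crossK p m a b,
      Metric.ball x (1 / (p : ℝ) ^ (m + ℓ)) ⊆ OmegaSet p m ℓ a b := by
  intro x hx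
  have hpR : (3 : ℝ) ≤ (p : ℝ) := by exact_mod_cast hp
  have hp0 : (0 : ℝ) < (p : ℝ) := by linarith
  set P : ℝ := (p : ℝ) ^ (m + ℓ) with hPdef
  have hP : 0 < P := by positivity
  have hpm : (0 : ℝ) < (p : ℝ) ^ m := by positivity
  have hpl : (0 : ℝ) < (p : ℝ) ^ ℓ := by positivity
  have hPml : P = (p : ℝ) ^ m * (p : ℝ) ^ ℓ := pow_add _ _ _
  -- cast identities
  have ea : ∀ c : ℤ, (c : ℝ) / (p : ℝ) ^ m = ((c * (p : ℤ) ^ ℓ : ℤ) : ℝ) / P := by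
    intro c; push_cast; rw [hPml]; field_simp
  have e3 : (1 : ℝ) / (p : ℝ) ^ m = (((p : ℤ) ^ ℓ : ℤ) : ℝ) / P := by
    push_cast; rw [hPml]; field_simp
  have hsub : Metric.ball x (1 / P) ⊆ ⋃ i : ℤ, ⋃ j : ℤ,
      {z | z ∈ tileE p (m + ℓ) i j ∧ (tileE p (m + ℓ) i j ∩ crossK p m a b).Nonempty} := by
    intro y hy
    rw [Metric.mem_ball] at hy
    have h0 : |y 0 - x 0| < 1 / P := lt_of_le_of_lt (coord_dist_le x y 0) hy
    have h1 : |y 1 - x 1| < 1 / P := lt_of_le_of_lt (coord_dist_le x y 1) hy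
    rcases hx with ⟨hx0, hx1⟩ | ⟨hx1, hx0⟩
    · -- vertical edge case: x 0 = a/p^m
      rw [abs_sub_le_iff] at hx1
      obtain ⟨j, t, hj1, hj2, ht1, ht2, ht3, ht4⟩ :=
        key1d P hP (b * (p : ℤ) ^ ℓ - (p : ℤ) ^ ℓ) (b * (p : ℤ) ^ ℓ + (p : ℤ) ^ ℓ)
          (x 1) (y 1)
          (by rw [ea b, e3] at hx1; push_cast at hx1 ⊢; rw [sub_div]; linarith [hx1.2])
          (by rw [ea b, e3] at hx1; push_cast at hx1 ⊢; rw [add_div]; linarith [hx1.1]) h1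
      have hA : x 0 = ((a * (p : ℤ) ^ ℓ : ℤ) : ℝ) / P := by rw [hx0, ea a]
      obtain ⟨i, hy0i, hx0i⟩ := pick_col P hP (a * (p : ℤ) ^ ℓ) (x 0) (y 0) hA h0
      refine Set.mem_iUnion.2 ⟨i, Set.mem_iUnion.2 ⟨j, ⟨⟨hy0i.1, hy0i.2⟩, ⟨hj1, hj2⟩⟩,
        (WithLp.equiv 2 (Fin 2 → ℝ)).symm ![(a : ℝ) / (p : ℝ) ^ m, (t : ℝ) / P], ?_, ?_⟩⟩
      · constructor
        · simp only [WithLp.equiv_symm_apply, PiLp.toLp_apply, Matrix.cons_val_zero]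
          rw [← hx0]; exact ⟨hx0i.1, hx0i.2⟩
        · simp only [WithLp.equiv_symm_apply, PiLp.toLp_apply, Matrix.cons_val_one, Matrix.head_cons]
          exact ⟨ht1, ht2⟩
      · left
        constructor
        · simp [WithLp.equiv_symm_apply, PiLp.toLp_apply]
        · simp only [WithLp.equiv_symm_apply, PiLp.toLp_apply, Matrix.cons_val_one, Matrix.head_cons]
          rw [ea b, e3, abs_sub_le_iff]
          push_cast at ht3 ht4 ⊢
          constructor
          · rw [sub_le_iff_le_add, ← add_div]; ring_nf at ht3 ht4 ⊢; linarith
          · rw [sub_le_iff_le_add, ← add_div]; ring_nf at ht3 ht4 ⊢; linarith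
    · -- horizontal edge case: x 1 = b/p^m  (symmetric)
      rw [abs_sub_le_iff] at hx0
      obtain ⟨j, t, hj1, hj2, ht1, ht2, ht3, ht4⟩ :=
        key1d P hP (a * (p : ℤ) ^ ℓ - (p : ℤ) ^ ℓ) (a * (p : ℤ) ^ ℓ + (p : ℤ) ^ ℓ)
          (x 0) (y 0)
          (by rw [ea a, e3] at hx0; push_cast at hx0 ⊢; rw [sub_div]; linarith [hx0.2])
          (by rw [ea a, e3] at hx0; push_cast at hx0 ⊢; rw [add_div]; linarith [hx0.1]) h0
      have hA : x 1 = ((b * (p : ℤ) ^ ℓ : ℤ) : ℝ) / P := by rw [hx1, ea b]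
      obtain ⟨i, hy0i, hx0i⟩ := pick_col P hP (b * (p : ℤ) ^ ℓ) (x 1) (y 1) hA h1
      refine Set.mem_iUnion.2 ⟨j, Set.mem_iUnion.2 ⟨i, ⟨⟨hj1, hj2⟩, ⟨hy0i.1, hy0i.2⟩⟩,
        (WithLp.equiv 2 (Fin 2 → ℝ)).symm ![(t : ℝ) / P, (b : ℝ) / (p : ℝ) ^ m], ?_, ?_⟩⟩
      · constructor
        · simp only [WithLp.equiv_symm_apply, PiLp.toLp_apply, Matrix.cons_val_zero]
          exact ⟨ht1, ht2⟩
        · simp only [WithLp.equiv_symm_apply, PiLp.toLp_apply, Matrix.cons_val_one, Matrix.head_cons]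
          rw [← hx1]; exact ⟨hx0i.1, hx0i.2⟩
      · right
        constructor
        · simp [WithLp.equiv_symm_apply, PiLp.toLp_apply]
        · simp only [WithLp.equiv_symm_apply, PiLp.toLp_apply, Matrix.cons_val_zero]
          rw [ea a, e3, abs_sub_le_iff]
          push_cast at ht3 ht4 ⊢
          constructor
          · rw [sub_le_iff_le_add, ← add_div]; ring_nf at ht3 ht4 ⊢; linarith
          · rw [sub_le_iff_le_add, ← add_div]; ring_nf at ht3 ht4 ⊢; linarith
  intro y hy
  exact mem_interior.2 ⟨Metric.ball x (1 / P), hsub, Metric.isOpen_ball, hy⟩
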